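/- (Weak–strong closedness of subdifferentials under the limit α ↘ 0.) Let (α_n) ⊂ (0,1) with α_n → 0. Suppose (β_n) ⊂ L²(Q) converges weakly in L²(Q) to β, (φ_n) ⊂ L²(Q) converges strongly in L²(Q) to φ, and β_n ∈ ∂E_{sg,α_n}(φ_n) for every n. Then β ∈ ∂I_K(φ); that is, |φ| ≤ 1 a.e. in Q and ⟨β, ψ − φ⟩ ≤ 0 for every ψ ∈ L²(Q) with |ψ| ≤ 1 a.e. in Q. -/

import Mathlib

open MeasureTheory Filter Set Classical
open scoped ENNReal

/-- The logarithmic potential `W_{sg,α}(s) = α((1+α+s)log(1+α+s) + (1+α−s)log(1+α−s))`.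
(In Mathlib, `Real.log 0 = 0`, so the convention `0·log 0 = 0` holds automatically.) -/
noncomputable def Wsg (α s : ℝ) : ℝ :=
  α * ((1 + α + s) * Real.log (1 + α + s) + (1 + α - s) * Real.log (1 + α - s))

/-- The Lebesgue measure restricted to `Q = Ω × (0,T')`. -/
noncomputable def Qmeasure (Ω : Set (EuclideanSpace ℝ (Fin 3))) (T' : ℝ) :
    Measure (EuclideanSpace ℝ (Fin 3) × ℝ) :=
  volume.restrict (Ω ×ˢ Set.Ioo 0 T')

/-- The functional `E_{sg,α} : L²(Q) → [0,∞]`, equal to `∫_Q W_{sg,α}(φ)` if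
`|φ| ≤ 1+α` a.e. in `Q`, and `+∞` otherwise. -/
noncomputable def Esg {X : Type*} [MeasurableSpace X] (μ : Measure X) (α : ℝ)
    (φ : X → ℝ) : ℝ≥0∞ :=
  if ∀ᵐ x ∂μ, |φ x| ≤ 1 + α then ∫⁻ x, ENNReal.ofReal (Wsg α (φ x)) ∂μ else ⊤

/-- The indicator functional `I_K` of `K = {φ ∈ L²(Q) : |φ| ≤ 1 a.e.}`. -/
noncomputable def IK {X : Type*} [MeasurableSpace X] (μ : Measure X)
    (φ : X → ℝ) : ℝ≥0∞ :=
  if ∀ᵐ x ∂μ, |φ x| ≤ 1 then 0 else ⊤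

/-- `ξ` belongs to the subdifferential `∂F(φ)` of a functional
`F : L²(μ) → [0,∞]` at `φ`: `F(φ) < ∞` and `⟨ξ, ψ − φ⟩ + F(φ) ≤ F(ψ)` for all
`ψ ∈ L²(μ)` (the inequality is trivial whenever `F(ψ) = ∞`). -/
def MemSubdiff {X : Type*} [MeasurableSpace X] (μ : Measure X)
    (F : (X → ℝ) → ℝ≥0∞) (φ ξ : X → ℝ) : Prop :=
  MemLp ξ 2 μ ∧ F φ ≠ ⊤ ∧
    ∀ ψ : X → ℝ, MemLp ψ 2 μ → F ψ ≠ ⊤ →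
      (∫ x, ξ x * (ψ x - φ x) ∂μ) + (F φ).toReal ≤ (F ψ).toReal

/-- `x log x ≤ 3 log 3` for `0 ≤ x ≤ 3`. -/
lemma xlogx_le {x : ℝ} (hx0 : 0 ≤ x) (hx : x ≤ 3) : x * Real.log x ≤ 3 * Real.log 3 := by
  have hlog3 : (0:ℝ) ≤ Real.log 3 := Real.log_nonneg (by norm_num)
  rcases le_or_gt x 1 with h | h
  · have h1 : Real.log x ≤ 0 := Real.log_nonpos hx0 h
    nlinarith
  · have h2 : Real.log x ≤ Real.log 3 := Real.log_le_log (by linarith) hx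
    nlinarith

/-- Pointwise bound for the potential. -/
lemma Wsg_le {α s : ℝ} (hα0 : 0 < α) (hα1 : α < 1) (hs : |s| ≤ 1) :
    Wsg α s ≤ 6 * Real.log 3 * α := by
  obtain ⟨hs1, hs2⟩ := abs_le.mp hs
  have h1 : (1 + α + s) * Real.log (1 + α + s) ≤ 3 * Real.log 3 :=
    xlogx_le (by linarith) (by linarith)
  have h2 : (1 + α - s) * Real.log (1 + α - s) ≤ 3 * Real.log 3 :=
    xlogx_le (by linarith) (by linarith)
  have := add_le_add h1 h2
  unfold Wsg
  nlinarith

/-- The `L²` inner product of `toLp` elements is the integral of the product. -/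
lemma inner_toLp_eq {X : Type*} [MeasurableSpace X] {μ : Measure X} {f g : X → ℝ}
    (hf : MemLp f 2 μ) (hg : MemLp g 2 μ) :
    (inner ℝ (hf.toLp f) (hg.toLp g) : ℝ) = ∫ x, f x * g x ∂μ := by
  rw [MeasureTheory.L2.inner_def]
  apply integral_congr_ae
  filter_upwards [hf.coeFn_toLp, hg.coeFn_toLp] with x h1 h2
  simp [h1, h2, RCLike.inner_apply, mul_comm]

/-- **Weak–strong closedness of subdifferentials as `α ↘ 0`.**
If `α_n ∈ (0,1)`, `α_n → 0`, `β_n ⇀ β` weakly in `L²(Q)`, `φ_n → φ` strongly in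
`L²(Q)`, and `β_n ∈ ∂E_{sg,α_n}(φ_n)` for all `n`, then `β ∈ ∂I_K(φ)`: that is,
`|φ| ≤ 1` a.e. in `Q` and `⟨β, ψ − φ⟩ ≤ 0` for every `ψ ∈ L²(Q)` with `|ψ| ≤ 1` a.e. -/
theorem stmt_4
    (T' : ℝ) (hT' : 0 < T')
    (Ω : Set (EuclideanSpace ℝ (Fin 3)))
    (hΩo : IsOpen Ω) (hΩc : IsConnected Ω) (hΩb : Bornology.IsBounded Ω)
    (α : ℕ → ℝ) (hα : ∀ n, α n ∈ Set.Ioo (0 : ℝ) 1)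
    (hα0 : Tendsto α atTop (nhds 0))
    (βn : ℕ → EuclideanSpace ℝ (Fin 3) × ℝ → ℝ)
    (β : EuclideanSpace ℝ (Fin 3) × ℝ → ℝ)
    (φn : ℕ → EuclideanSpace ℝ (Fin 3) × ℝ → ℝ)
    (φ : EuclideanSpace ℝ (Fin 3) × ℝ → ℝ)
    (hβn : ∀ n, MemLp (βn n) 2 (Qmeasure Ω T')) (hβ : MemLp β 2 (Qmeasure Ω T'))
    (hφn : ∀ n, MemLp (φn n) 2 (Qmeasure Ω T')) (hφ : MemLp φ 2 (Qmeasure Ω T'))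
    (hβweak : ∀ g : EuclideanSpace ℝ (Fin 3) × ℝ → ℝ, MemLp g 2 (Qmeasure Ω T') →
      Tendsto (fun n => ∫ x, βn n x * g x ∂(Qmeasure Ω T')) atTop
        (nhds (∫ x, β x * g x ∂(Qmeasure Ω T'))))
    (hφstrong : Tendsto (fun n => eLpNorm (fun x => φn n x - φ x) 2 (Qmeasure Ω T'))
      atTop (nhds 0))
    (hsub : ∀ n, MemSubdiff (Qmeasure Ω T') (Esg (Qmeasure Ω T') (α n)) (φn n) (βn n)) :
    (∀ᵐ x ∂(Qmeasure Ω T'), |φ x| ≤ 1) ∧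
    ∀ ψ : EuclideanSpace ℝ (Fin 3) × ℝ → ℝ, MemLp ψ 2 (Qmeasure Ω T') →
      (∀ᵐ x ∂(Qmeasure Ω T'), |ψ x| ≤ 1) →
      (∫ x, β x * (ψ x - φ x) ∂(Qmeasure Ω T')) ≤ 0 := by
  set μQ := Qmeasure Ω T' with hμQ
  -- finiteness of the measure
  have hμfin : μQ univ < ⊤ := by
    rw [hμQ, Qmeasure, Measure.restrict_apply_univ]
    exact (hΩb.prod (Metric.isBounded_Ioo 0 T')).measure_lt_top
  -- each φn satisfies the a.e. bound
  have hφn_le : ∀ n, ∀ᵐ x ∂μQ, |φn n x| ≤ 1 + α n := by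
    intro n
    by_contra h
    exact (hsub n).2.1 (by simp only [Esg, if_neg h])
  -- Part 1 : |φ| ≤ 1 a.e.
  have hmeas : TendstoInMeasure μQ φn atTop φ := by
    apply tendstoInMeasure_of_tendsto_eLpNorm (p := 2) (by norm_num)
      (fun n => (hφn n).aestronglyMeasurable) hφ.aestronglyMeasurable
    simpa [Pi.sub_def] using hφstrong
  obtain ⟨ns, hns_mono, hns_ae⟩ := hmeas.exists_seq_tendsto_ae
  have hpart1 : ∀ᵐ x ∂μQ, |φ x| ≤ 1 := by
    filter_upwards [hns_ae, ae_all_iff.2 hφn_le] with x hx hxn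
    have hlim : Tendsto (fun i => |φn (ns i) x|) atTop (nhds |φ x|) := hx.abs
    have hbd : Tendsto (fun i => 1 + α (ns i)) atTop (nhds 1) := by
      have := hα0.comp hns_mono.tendsto_atTop
      simpa using tendsto_const_nhds.add this
    exact le_of_tendsto_of_tendsto' hlim hbd fun i => hxn (ns i)
  refine ⟨hpart1, ?_⟩
  -- Part 2
  intro ψ hψ hψ1
  -- the Lp elements
  set B : ℕ → Lp ℝ 2 μQ := fun n => (hβn n).toLp (βn n) with hBdef
  -- Banach–Steinhaus : uniform bound on ‖βn‖₂
  obtain ⟨C, hC⟩ : ∃ C : ℝ, ∀ n, ‖B n‖ ≤ C := by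
    obtain ⟨C, hC⟩ := banach_steinhaus (g := fun n => innerSL ℝ (B n)) (fun G => by
      have hmem := Lp.memLp G
      have heq : ∀ n, (innerSL ℝ (B n)) G = ∫ x, βn n x * G x ∂μQ := by
        intro n
        have h1 := inner_toLp_eq (hβn n) hmem
        rw [Lp.toLp_coeFn G hmem] at h1
        simpa using h1
      have ht := (hβweak G hmem).norm
      obtain ⟨c, hc⟩ := ht.bddAbove_range
      exact ⟨c, fun n => by rw [heq n]; exact hc (mem_range_self n)⟩)
    exact ⟨C, fun n => by simpa [innerSL_apply_norm] using hC n⟩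
  have hC0 : 0 ≤ C := le_trans (norm_nonneg _) (hC 0)
  set K₁ : ℝ := 6 * Real.log 3 with hK₁
  have hK₁0 : 0 ≤ K₁ := by
    have : (0:ℝ) ≤ Real.log 3 := Real.log_nonneg (by norm_num)
    positivity
  set M : ℝ := (μQ univ).toReal with hM
  -- bound on Esg ψ
  have hEψ_le : ∀ n, Esg μQ (α n) ψ ≤ ENNReal.ofReal (K₁ * α n) * μQ univ := by
    intro n
    obtain ⟨hαn0, hαn1⟩ := hα n
    have hcond : ∀ᵐ x ∂μQ, |ψ x| ≤ 1 + α n :=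
      hψ1.mono fun x hx => hx.trans (by linarith)
    rw [Esg, if_pos hcond]
    calc ∫⁻ x, ENNReal.ofReal (Wsg (α n) (ψ x)) ∂μQ
        ≤ ∫⁻ _, ENNReal.ofReal (K₁ * α n) ∂μQ := by
          refine lintegral_mono_ae (hψ1.mono fun x hx => ENNReal.ofReal_le_ofReal ?_)
          have := Wsg_le hαn0 hαn1 hx
          rw [hK₁]; linarith
      _ = ENNReal.ofReal (K₁ * α n) * μQ univ := by rw [lintegral_const]
  have hEψ_ne : ∀ n, Esg μQ (α n) ψ ≠ ⊤ := by
    intro n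
    exact ((hEψ_le n).trans_lt
      (ENNReal.mul_lt_top ENNReal.ofReal_lt_top hμfin)).ne
  have hEψ_toReal : ∀ n, (Esg μQ (α n) ψ).toReal ≤ K₁ * α n * M := by
    intro n
    have h1 := ENNReal.toReal_mono
      (ENNReal.mul_ne_top ENNReal.ofReal_ne_top hμfin.ne) (hEψ_le n)
    rwa [ENNReal.toReal_mul, ENNReal.toReal_ofReal
      (mul_nonneg hK₁0 (hα n).1.le)] at h1
  -- subdifferential inequality with test function ψ
  have hkey : ∀ n, ∫ x, βn n x * (ψ x - φn n x) ∂μQ ≤ K₁ * α n * M := by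
    intro n
    have h1 := (hsub n).2.2 ψ hψ (hEψ_ne n)
    have h2 : (0:ℝ) ≤ (Esg μQ (α n) (φn n)).toReal := ENNReal.toReal_nonneg
    linarith [hEψ_toReal n]
  -- splitting of the integral via Lp inner products
  have hsplit : ∀ n, ∫ x, βn n x * (ψ x - φ x) ∂μQ
      = (∫ x, βn n x * (ψ x - φn n x) ∂μQ) + ∫ x, βn n x * (φn n x - φ x) ∂μQ := by
    intro n
    have h1 : (hψ.sub hφ : MemLp (fun x => ψ x - φ x) 2 μQ).toLp (fun x => ψ x - φ x)
        = (hψ.sub (hφn n) : MemLp (fun x => ψ x - φn n x) 2 μQ).toLp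
            (fun x => ψ x - φn n x)
          + ((hφn n).sub hφ : MemLp (fun x => φn n x - φ x) 2 μQ).toLp
            (fun x => φn n x - φ x) := by
      rw [← MemLp.toLp_add]
      exact MemLp.toLp_congr _ _ (ae_of_all _ fun x => by
        simp only [Pi.add_apply]; ring)
    rw [← inner_toLp_eq (g := fun x => ψ x - φ x) (hβn n) (hψ.sub hφ),
      ← inner_toLp_eq (g := fun x => ψ x - φn n x) (hβn n) (hψ.sub (hφn n)),
      ← inner_toLp_eq (g := fun x => φn n x - φ x) (hβn n) ((hφn n).sub hφ),
      h1, inner_add_right]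
  -- bound the second piece by C * ε n
  have hpiece : ∀ n, ∫ x, βn n x * (φn n x - φ x) ∂μQ
      ≤ C * (eLpNorm (fun x => φn n x - φ x) 2 μQ).toReal := by
    intro n
    have h1 := real_inner_le_norm (B n)
      (((hφn n).sub hφ : MemLp (fun x => φn n x - φ x) 2 μQ).toLp
        (fun x => φn n x - φ x))
    rw [inner_toLp_eq (g := fun x => φn n x - φ x) (hβn n) ((hφn n).sub hφ)] at h1
    refine h1.trans ?_
    have h2 : ‖((hφn n).sub hφ : MemLp (fun x => φn n x - φ x) 2 μQ).toLp
        (fun x => φn n x - φ x)‖ = (eLpNorm (fun x => φn n x - φ x) 2 μQ).toReal :=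
      Lp.norm_toLp _ _
    rw [h2]
    exact mul_le_mul_of_nonneg_right (hC n) ENNReal.toReal_nonneg
  -- the vanishing error terms
  have hε : Tendsto (fun n => (eLpNorm (fun x => φn n x - φ x) 2 μQ).toReal)
      atTop (nhds 0) := by
    have := (ENNReal.tendsto_toReal (a := 0) (by norm_num)).comp hφstrong
    simpa [Function.comp_def] using this
  have hαr : Tendsto (fun n => K₁ * α n * M) atTop (nhds 0) := by
    have := (hα0.const_mul K₁).mul_const M
    simpa using this
  have hrhs : Tendsto (fun n => K₁ * α n * M
      + C * (eLpNorm (fun x => φn n x - φ x) 2 μQ).toReal) atTop (nhds 0) := by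
    have := hαr.add (hε.const_mul C)
    simpa using this
  have hlhs := hβweak (fun x => ψ x - φ x) (hψ.sub hφ)
  refine le_of_tendsto_of_tendsto' hlhs hrhs fun n => ?_
  rw [hsplit n]
  exact add_le_add (hkey n) (hpiece n)
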